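/- For any collection 𝒞 and any noise level i ≥ 2, the noisy closure dimension satisfies NC_{i−1}(𝒞) ≥ ⌊√(NC_i(𝒞))⌋. In particular, if NC_i(𝒞) = ∞ then NC_{i−1}(𝒞) = ∞. -/

import Mathlib

open Set Classical

/-- The set of languages in `𝒞` consistent with sample `S` at noise level `i`. -/
def Consistent {U : Type*} (𝒞 : Set (Set U)) (S : Set U) (i : ℕ) : Set (Set U) :=
  {L | L ∈ 𝒞 ∧ (S \ L).encard ≤ (i : ℕ∞)}

/-- The noisy closure of `S` at noise level `i`. -/
noncomputable def NoisyClosure {U : Type*} (𝒞 : Set (Set U)) (S : Set U) (i : ℕ) : Set U :=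
  if (Consistent 𝒞 S i).Nonempty then ⋂ L ∈ Consistent 𝒞 S i, L else ∅

/-- The noisy closure dimension of `𝒞` at noise level `i`, as an extended natural. -/
noncomputable def NC {U : Type*} (𝒞 : Set (Set U)) (i : ℕ) : ℕ∞ :=
  ⨆ S ∈ {S : Set U | S.Finite ∧ (Consistent 𝒞 S i).Nonempty ∧
      (NoisyClosure 𝒞 S i).Finite}, S.encard

/-- `x` is an enumeration of `K` with noise level at most `i`. -/
def IsNoisyEnum {U : Type*} (K : Set U) (i : ℕ) (x : ℕ → U) : Prop :=
  Function.Injective x ∧ K ⊆ Set.range x ∧ (Set.range x \ K).encard ≤ (i : ℕ∞)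

/-- The set of strings revealed up to and including time `t`. -/
def seenSet {U : Type*} (x : ℕ → U) (t : ℕ) : Set U := x '' Set.Iic t

/-- The prefix `x₀, …, x_t` of the enumeration, as a list fed to the generator. -/
def prefixList {U : Type*} (x : ℕ → U) (t : ℕ) : List U := (List.range (t + 1)).map x

/-- `G` uniformly generates with noise level `i` for `𝒞`. -/
def UniformGen {U : Type*} (𝒞 : Set (Set U)) (i : ℕ) (G : List U → U) : Prop :=
  ∃ t0 : ℕ, ∀ K ∈ 𝒞, ∀ x : ℕ → U, IsNoisyEnum K i x →
    ∀ t ≥ t0, G (prefixList x t) ∈ K \ seenSet x t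

/-- `G` non-uniformly generates with noise level `i` for `𝒞`. -/
def NonUniformGen {U : Type*} (𝒞 : Set (Set U)) (i : ℕ) (G : List U → U) : Prop :=
  ∀ K ∈ 𝒞, ∃ t0 : ℕ, ∀ x : ℕ → U, IsNoisyEnum K i x →
    ∀ t ≥ t0, G (prefixList x t) ∈ K \ seenSet x t

/-- `G` uniformly noise-dependently generates for `𝒞`. -/
def UniformNoiseDepGen {U : Type*} (𝒞 : Set (Set U)) (G : List U → U) : Prop :=
  ∀ n : ℕ, ∃ t0 : ℕ, ∀ K ∈ 𝒞, ∀ x : ℕ → U, IsNoisyEnum K n x →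
    ∀ t ≥ t0, G (prefixList x t) ∈ K \ seenSet x t

/-- `G` non-uniformly noise-dependently generates for `𝒞`. -/
def NonUniformNoiseDepGen {U : Type*} (𝒞 : Set (Set U)) (G : List U → U) : Prop :=
  ∀ n : ℕ, ∀ K ∈ 𝒞, ∃ t0 : ℕ, ∀ x : ℕ → U, IsNoisyEnum K n x →
    ∀ t ≥ t0, G (prefixList x t) ∈ K \ seenSet x t

/-- The infinite "column" `B c` in the universe `ℕ × ℕ`. -/
def column (c : ℕ) : Set (ℕ × ℕ) := {p | p.1 = c}

/-- The collection of all nonempty unions of columns. -/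
def columnCollection : Set (Set (ℕ × ℕ)) :=
  {L | ∃ x : Set ℕ, x.Nonempty ∧ L = ⋃ c ∈ x, column c}

lemma witness_le {U : Type*} (𝒞 : Set (Set U)) (j : ℕ) {S : Set U}
    (h1 : S.Finite) (h2 : (Consistent 𝒞 S j).Nonempty) (h3 : (NoisyClosure 𝒞 S j).Finite) :
    S.encard ≤ NC 𝒞 j := by
  have hmem : S ∈ {S : Set U | S.Finite ∧ (Consistent 𝒞 S j).Nonempty ∧
      (NoisyClosure 𝒞 S j).Finite} := ⟨h1, h2, h3⟩
  exact le_biSup _ hmem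

lemma blocks_lemma {U : Type*} [DecidableEq U] (k : ℕ) :
    ∀ (j : ℕ) (P Q : Finset U), Disjoint P Q → P.card ≤ j →
      j * (k+1) ≤ P.card + Q.card →
      ∃ Ts : List (Finset U), Ts.length = j ∧ Ts.Pairwise Disjoint ∧
        ∀ T ∈ Ts, T.card = k+1 ∧ T ⊆ P ∪ Q ∧ (T ∩ P).card ≤ 1 := by
  intro j
  induction j with
  | zero => exact fun P Q _ _ _ => ⟨[], rfl, List.Pairwise.nil, by simp⟩
  | succ j ih =>
    intro P Q hdis hPc hcard
    have hmul : (j+1) * (k+1) = j * (k+1) + (k+1) := by ring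
    rcases Finset.eq_empty_or_nonempty P with hP | hP
    · subst hP
      simp only [Finset.card_empty, zero_add] at hcard hPc ⊢
      have hk1 : k + 1 ≤ Q.card := le_trans (by nlinarith) hcard
      obtain ⟨B, hBQ, hBcard⟩ := Finset.exists_subset_card_eq hk1
      have hQB : (Q \ B).card = Q.card - (k+1) := by rw [Finset.card_sdiff_of_subset hBQ, hBcard]
      obtain ⟨Ts, hlen, hpw, hprop⟩ := ih ∅ (Q \ B) (Finset.disjoint_empty_left _)
        (by simp) (by rw [hQB]; simp; omega)
      refine ⟨B :: Ts, by simp [hlen], ?_, ?_⟩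
      · refine List.Pairwise.cons (fun T hT => ?_) hpw
        have hsub := (hprop T hT).2.1
        simp only [Finset.empty_union] at hsub
        exact Finset.disjoint_of_subset_right hsub (Finset.disjoint_sdiff)
      · intro T hT0
        rcases List.mem_cons.1 hT0 with rfl | hT
        · refine ⟨hBcard, by simp [hBQ], by simp⟩
        · obtain ⟨h1, h2, h3⟩ := hprop T hT
          simp only [Finset.empty_union] at h2
          exact ⟨h1, le_trans h2 (le_trans (Finset.sdiff_subset) (Finset.subset_union_right)), h3⟩
    · obtain ⟨p, hp⟩ := hP
      have hPpos : 1 ≤ P.card := Finset.card_pos.2 ⟨p, hp⟩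
      have hmm : k ≤ (j+1)*k := Nat.le_mul_of_pos_left _ (Nat.succ_pos j)
      have hmul2 : (j+1) * (k+1) = (j+1) + (j+1) * k := by ring
      have hkQ : k ≤ Q.card := by omega
      obtain ⟨K, hKQ, hKcard⟩ := Finset.exists_subset_card_eq hkQ
      have hpK : p ∉ K := fun h => (Finset.disjoint_left.1 hdis hp) (hKQ h)
      set B := insert p K with hB
      have hBcard : B.card = k + 1 := by rw [hB, Finset.card_insert_of_notMem hpK, hKcard]
      have hQK : (Q \ K).card = Q.card - k := by rw [Finset.card_sdiff_of_subset hKQ, hKcard]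
      have hPe : (P.erase p).card = P.card - 1 := Finset.card_erase_of_mem hp
      obtain ⟨Ts, hlen, hpw, hprop⟩ := ih (P.erase p) (Q \ K)
        (hdis.mono (Finset.erase_subset _ _) (Finset.sdiff_subset))
        (by omega) (by omega)
      refine ⟨B :: Ts, by simp [hlen], ?_, ?_⟩
      · refine List.Pairwise.cons (fun T hT => ?_) hpw
        have hsub := (hprop T hT).2.1
        rw [Finset.disjoint_left]
        intro a haB haT
        have haT' := hsub haT
        rw [Finset.mem_union] at haT'
        rw [hB, Finset.mem_insert] at haB
        rcases haB with rfl | haK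
        · rcases haT' with h | h
          · exact (Finset.notMem_erase a P) h
          · exact (Finset.disjoint_left.1 hdis hp) (Finset.sdiff_subset h)
        · rcases haT' with h | h
          · exact (Finset.disjoint_left.1 hdis (Finset.erase_subset _ _ h)) (hKQ haK)
          · exact (Finset.mem_sdiff.1 h).2 haK
      · intro T hT0
        rcases List.mem_cons.1 hT0 with rfl | hT
        · refine ⟨hBcard, ?_, ?_⟩
          · intro a haB
            rw [hB, Finset.mem_insert] at haB
            rcases haB with rfl | haK
            · exact Finset.mem_union_left _ hp
            · exact Finset.mem_union_right _ (hKQ haK)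
          · have : B ∩ P ⊆ {p} := by
              intro a ha
              rw [Finset.mem_inter, hB, Finset.mem_insert] at ha
              rcases ha.1 with rfl | haK
              · exact Finset.mem_singleton_self _
              · exact absurd (hKQ haK) (Finset.disjoint_left.1 hdis ha.2)
            exact le_trans (Finset.card_le_card this) (by simp)
        · obtain ⟨h1, h2, h3⟩ := hprop T hT
          refine ⟨h1, ?_, ?_⟩
          · refine le_trans h2 ?_
            exact Finset.union_subset_union (Finset.erase_subset _ _) (Finset.sdiff_subset)
          · refine le_trans (Finset.card_le_card ?_) h3
            intro a ha
            rw [Finset.mem_inter] at ha ⊢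
            refine ⟨ha.1, ?_⟩
            have := h2 ha.1
            rw [Finset.mem_union] at this
            rcases this with h | h
            · exact h
            · exact absurd (Finset.sdiff_subset h) (Finset.disjoint_left.1 hdis ha.2)

lemma pick_lemma {U : Type*} :
    ∀ (Is : List (Set U)), (∀ I ∈ Is, I.Infinite) →
      ∃ us : List U, us.Nodup ∧ List.Forall₂ (fun u I => u ∈ I) us Is := by
  intro Is
  induction Is with
  | nil => exact fun _ => ⟨[], List.nodup_nil, List.Forall₂.nil⟩
  | cons I rest ih =>
    intro h
    obtain ⟨us, hnd, hf⟩ := ih (fun I hI => h I (List.mem_cons_of_mem _ hI))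
    classical
    obtain ⟨a, haI, ha⟩ := (h I List.mem_cons_self).exists_notMem_finset us.toFinset
    rw [List.mem_toFinset] at ha
    exact ⟨a :: us, List.nodup_cons.2 ⟨ha, hnd⟩, List.Forall₂.cons haI hf⟩

lemma no_witness {U : Type*} (𝒞 : Set (Set U)) (j k : ℕ) (hk : NC 𝒞 j ≤ (k : ℕ∞))
    (T : Finset U) (hTcard : T.card = k + 1)
    (hne : (Consistent 𝒞 (↑T) j).Nonempty) :
    (NoisyClosure 𝒞 (↑T : Set U) j).Infinite := by
  by_contra hfin
  rw [Set.not_infinite] at hfin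
  have h1 := witness_le 𝒞 j (T.finite_toSet) hne hfin
  rw [Set.encard_coe_eq_coe_finsetCard, hTcard] at h1
  have h2 := le_trans h1 hk
  rw [Nat.cast_le] at h2
  omega

lemma main_step {U : Type*} (𝒞 : Set (Set U)) (n k : ℕ) (hn : 2 ≤ n)
    (S : Set U) (hS : S.Finite) (hcons : (Consistent 𝒞 S n).Nonempty)
    (hclos : (NoisyClosure 𝒞 S n).Finite)
    (hsize : (((k+1)^2 : ℕ) : ℕ∞) ≤ S.encard)
    (hk : NC 𝒞 (n-1) ≤ (k : ℕ∞)) : False := by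
  classical
  obtain ⟨L₀, hL₀C, hL₀n⟩ := hcons
  have hcons' : (Consistent 𝒞 S n).Nonempty := ⟨L₀, hL₀C, hL₀n⟩
  set sF : Finset U := hS.toFinset with hsF
  have hsFc : (↑sF : Set U) = S := hS.coe_toFinset
  have hScard : (k+1)^2 ≤ sF.card := by
    rw [← hsFc, Set.encard_coe_eq_coe_finsetCard] at hsize
    exact_mod_cast hsize
  have hpow : (k+1)^2 = (k+1)*(k+1) := by ring
  set NF : Finset U := sF.filter (fun a => a ∉ L₀) with hNF
  have hNFc : (↑NF : Set U) = S \ L₀ := by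
    ext x
    simp [hNF, hsF, Set.Finite.mem_toFinset, Set.mem_diff]
  have hNn : NF.card ≤ n := by
    rw [← hNFc, Set.encard_coe_eq_coe_finsetCard] at hL₀n
    exact_mod_cast hL₀n
  have hNsub : NF ⊆ sF := Finset.filter_subset _ _
  have h1n : (1:ℕ∞) ≤ ((n-1 : ℕ) : ℕ∞) := by exact_mod_cast (by omega : 1 ≤ n - 1)
  -- blocks
  have hblocks : ∃ Ts : List (Finset U), Ts.length = k+1 ∧ Ts.Pairwise Disjoint ∧
      ∀ T ∈ Ts, T.card = k+1 ∧ (↑T : Set U) ⊆ S ∧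
        ((↑T : Set U) \ L₀).encard ≤ ((n-1 : ℕ) : ℕ∞) := by
    by_cases hc : NF.card ≤ k+1
    · have hNle : NF.card ≤ sF.card := Finset.card_le_card hNsub
      have hQc : (sF \ NF).card = sF.card - NF.card := Finset.card_sdiff_of_subset hNsub
      obtain ⟨Ts, h1, h2, h3⟩ := blocks_lemma k (k+1) NF (sF \ NF)
        (Finset.disjoint_sdiff) hc (by omega)
      refine ⟨Ts, h1, h2, fun T hT => ?_⟩
      obtain ⟨hc1, hc2, hc3⟩ := h3 T hT
      have hTsF : T ⊆ sF := hc2.trans (Finset.union_subset hNsub (Finset.sdiff_subset))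
      have hTS : (↑T : Set U) ⊆ S := by
        rw [← hsFc]
        exact Finset.coe_subset.2 hTsF
      refine ⟨hc1, hTS, ?_⟩
      have hsub2 : (↑T : Set U) \ L₀ ⊆ (↑(T ∩ NF) : Set U) := by
        intro x hx
        obtain ⟨hxT, hxL⟩ := hx
        rw [Finset.coe_inter]
        refine ⟨hxT, ?_⟩
        rw [Finset.mem_coe] at hxT ⊢
        rw [hNF, Finset.mem_filter]
        exact ⟨hTsF hxT, hxL⟩
      calc ((↑T : Set U) \ L₀).encard ≤ (↑(T ∩ NF) : Set U).encard := Set.encard_le_encard hsub2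
        _ = ((T ∩ NF).card : ℕ∞) := Set.encard_coe_eq_coe_finsetCard _
        _ ≤ 1 := by exact_mod_cast hc3
        _ ≤ ↑(n-1) := h1n
    · push_neg at hc
      have hkn : k + 1 ≤ n - 1 := by omega
      obtain ⟨Ts, h1, h2, h3⟩ := blocks_lemma k (k+1) (∅ : Finset U) sF
        (Finset.disjoint_empty_left _) (by simp)
        (by simp only [Finset.card_empty, zero_add]; omega)
      refine ⟨Ts, h1, h2, fun T hT => ?_⟩
      obtain ⟨hc1, hc2, _⟩ := h3 T hT
      rw [Finset.empty_union] at hc2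
      have hTsF : T ⊆ sF := hc2
      have hTS : (↑T : Set U) ⊆ S := by
        rw [← hsFc]
        exact Finset.coe_subset.2 hTsF
      refine ⟨hc1, hTS, ?_⟩
      calc ((↑T : Set U) \ L₀).encard ≤ (↑T : Set U).encard := Set.encard_le_encard (Set.diff_subset)
        _ = (T.card : ℕ∞) := Set.encard_coe_eq_coe_finsetCard _
        _ ≤ ↑(n-1) := by
            rw [hc1]
            exact_mod_cast hkn
  obtain ⟨Ts, hTslen, hTspw, hTsprop⟩ := hblocks
  -- each block is consistent with L₀ at level n-1, and has infinite closure
  have hmemT : ∀ T ∈ Ts, L₀ ∈ Consistent 𝒞 (↑T : Set U) (n-1) :=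
    fun T hT => ⟨hL₀C, (hTsprop T hT).2.2⟩
  have hinf : ∀ T ∈ Ts, (NoisyClosure 𝒞 (↑T : Set U) (n-1)).Infinite :=
    fun T hT => no_witness 𝒞 (n-1) k hk T (hTsprop T hT).1 ⟨L₀, hmemT T hT⟩
  obtain ⟨us, hnd, hf2⟩ := pick_lemma
      (Ts.map (fun T : Finset U => NoisyClosure 𝒞 (T : Set U) (n-1))) (by
    intro I hI
    rw [List.mem_map] at hI
    obtain ⟨T, hT, rfl⟩ := hI
    exact hinf T hT)
  have hlenIs : us.length = (Ts.map (fun T : Finset U =>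
      NoisyClosure 𝒞 (T : Set U) (n-1))).length := hf2.length_eq
  have hlenT : us.length = Ts.length := by rw [hlenIs, List.length_map]
  have hlen : us.length = k + 1 := by rw [hlenT, hTslen]
  set Tstar : Finset U := us.toFinset with hTstar
  have hTscard : Tstar.card = k+1 := by
    rw [hTstar, List.toFinset_card_of_nodup hnd, hlen]
  -- key fact
  have hkey : ∀ (ia : ℕ) (h1 : ia < us.length) (h2 : ia < Ts.length) (L : Set U),
      L ∈ Consistent 𝒞 S n → us.get ⟨ia, h1⟩ ∉ L →
      S \ L ⊆ (↑(Ts.get ⟨ia, h2⟩) : Set U) ∧ (S \ L).Nonempty := by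
    intro ia h1 h2 L hL hnotin
    obtain ⟨hLC, hLn⟩ := hL
    have hgm : ia < (Ts.map (fun T : Finset U =>
        NoisyClosure 𝒞 (T : Set U) (n-1))).length := by
      rw [List.length_map]; exact h2
    have hget := (List.forall₂_iff_get.1 hf2).2 ia h1 hgm
    rw [show (Ts.map (fun T : Finset U => NoisyClosure 𝒞 (T : Set U) (n-1))).get ⟨ia, hgm⟩ = NoisyClosure 𝒞 (↑(Ts.get ⟨ia, h2⟩) : Set U) (n-1) from by simp] at hget
    have hTmem : Ts.get ⟨ia, h2⟩ ∈ Ts := List.get_mem _ _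
    have hcns : (Consistent 𝒞 (↑(Ts.get ⟨ia, h2⟩) : Set U) (n-1)).Nonempty :=
      ⟨L₀, hmemT _ hTmem⟩
    rw [NoisyClosure, if_pos hcns] at hget
    have hLnot : L ∉ Consistent 𝒞 (↑(Ts.get ⟨ia, h2⟩) : Set U) (n-1) := by
      intro hmem
      exact hnotin (Set.mem_iInter₂.1 hget L hmem)
    have hgt : ((n-1 : ℕ) : ℕ∞) < ((↑(Ts.get ⟨ia, h2⟩) : Set U) \ L).encard := by
      by_contra hle
      push_neg at hle
      exact hLnot ⟨hLC, hle⟩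
    have hge : (n : ℕ∞) ≤ ((↑(Ts.get ⟨ia, h2⟩) : Set U) \ L).encard := by
      have hx1 : ((n-1:ℕ) : ℕ∞) + 1 ≤ ((↑(Ts.get ⟨ia, h2⟩) : Set U) \ L).encard :=
        (ENat.add_one_le_iff (by simp)).2 hgt
      have hx2 : (n : ℕ∞) = ((n-1:ℕ) : ℕ∞) + 1 := by
        have hx3 : n - 1 + 1 = n := by omega
        rw [← hx3]
        push_cast
        ring
      rw [hx2]
      exact hx1
    have hTS : (↑(Ts.get ⟨ia, h2⟩) : Set U) ⊆ S := (hTsprop _ hTmem).2.1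
    have heq : (↑(Ts.get ⟨ia, h2⟩) : Set U) \ L = S \ L :=
      Set.Finite.eq_of_subset_of_encard_le (hS.subset (Set.diff_subset.trans hTS))
        (Set.diff_subset_diff_left hTS) (le_trans hLn hge)
    constructor
    · rw [← heq]; exact Set.diff_subset
    · rw [← heq, ← Set.encard_ne_zero]
      intro h0
      rw [h0] at hge
      simp at hge
      omega
  -- the new witness
  have hsubC : Consistent 𝒞 S n ⊆ Consistent 𝒞 (↑Tstar : Set U) (n-1) := by
    intro L hL
    refine ⟨hL.1, ?_⟩
    have hone : ((↑Tstar : Set U) \ L).encard ≤ 1 := by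
      rw [Set.encard_le_one_iff]
      intro x y hx hy
      obtain ⟨hxT, hxL⟩ := hx
      obtain ⟨hyT, hyL⟩ := hy
      rw [hTstar, Finset.mem_coe, List.mem_toFinset] at hxT hyT
      obtain ⟨a, ha⟩ := List.get_of_mem hxT
      obtain ⟨b, hb⟩ := List.get_of_mem hyT
      have ha2 : a.1 < Ts.length := by rw [← hlenT]; exact a.2
      have hb2 : b.1 < Ts.length := by rw [← hlenT]; exact b.2
      have hka := hkey a.1 a.2 ha2 L hL (by
        rw [show us.get ⟨a.1, a.2⟩ = x from ha]; exact hxL)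
      have hkb := hkey b.1 b.2 hb2 L hL (by
        rw [show us.get ⟨b.1, b.2⟩ = y from hb]; exact hyL)
      by_cases hab : a.1 = b.1
      · rw [← ha, ← hb]
        congr 1
        exact Fin.ext hab
      · exfalso
        have hdisj : Disjoint (↑(Ts.get ⟨a.1, ha2⟩) : Set U)
            (↑(Ts.get ⟨b.1, hb2⟩) : Set U) := by
          rw [Finset.disjoint_coe]
          rcases Nat.lt_or_ge a.1 b.1 with h | h
          · exact List.pairwise_iff_get.1 hTspw ⟨a.1, ha2⟩ ⟨b.1, hb2⟩ h
          · have hlt : b.1 < a.1 := by omega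
            exact (List.pairwise_iff_get.1 hTspw ⟨b.1, hb2⟩ ⟨a.1, ha2⟩ hlt).symm
        obtain ⟨z, hz⟩ := hka.2
        exact Set.disjoint_left.1 hdisj (hka.1 hz) (hkb.1 hz)
    exact le_trans hone h1n
  have hTne : (Consistent 𝒞 (↑Tstar : Set U) (n-1)).Nonempty := ⟨L₀, hsubC ⟨hL₀C, hL₀n⟩⟩
  have hcl : NoisyClosure 𝒞 (↑Tstar : Set U) (n-1) ⊆ NoisyClosure 𝒞 S n := by
    rw [NoisyClosure, if_pos hTne, NoisyClosure, if_pos hcons']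
    intro x hx
    exact Set.mem_iInter₂.2 (fun L hL => Set.mem_iInter₂.1 hx L (hsubC hL))
  have hfin : (NoisyClosure 𝒞 (↑Tstar : Set U) (n-1)).Finite := hclos.subset hcl
  have hW := witness_le 𝒞 (n-1) (Tstar.finite_toSet) hTne hfin
  rw [Set.encard_coe_eq_coe_finsetCard, hTscard] at hW
  have hle := le_trans hW hk
  rw [Nat.cast_le] at hle
  omega

lemma exists_big_witness {U : Type*} (𝒞 : Set (Set U)) (i : ℕ) (c : ℕ)
    (hc : (c : ℕ∞) < NC 𝒞 i) :
    ∃ S : Set U, S.Finite ∧ (Consistent 𝒞 S i).Nonempty ∧ (NoisyClosure 𝒞 S i).Finite ∧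
      ((c + 1 : ℕ) : ℕ∞) ≤ S.encard := by
  rw [NC, lt_iSup_iff] at hc
  obtain ⟨S, hS⟩ := hc
  by_cases hmem : S ∈ {S : Set U | S.Finite ∧ (Consistent 𝒞 S i).Nonempty ∧
      (NoisyClosure 𝒞 S i).Finite}
  · rw [iSup_pos hmem] at hS
    refine ⟨S, hmem.1, hmem.2.1, hmem.2.2, ?_⟩
    have h1 : (c : ℕ∞) + 1 ≤ S.encard := (ENat.add_one_le_iff (ENat.coe_ne_top c)).2 hS
    have h2 : ((c + 1 : ℕ) : ℕ∞) = (c : ℕ∞) + 1 := by push_cast; ring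
    rw [h2]
    exact h1
  · rw [iSup_neg hmem] at hS
    exact absurd hS (by simp)

theorem stmt4 {U : Type*} [Countable U] (𝒞 : Set (Set U)) (i : ℕ) (hi : 2 ≤ i) :
    (NC 𝒞 i ≠ ⊤ → ((Nat.sqrt (NC 𝒞 i).toNat : ℕ∞) ≤ NC 𝒞 (i - 1))) ∧
    (NC 𝒞 i = ⊤ → NC 𝒞 (i - 1) = ⊤) := by
  constructor
  · intro hne
    rcases eq_or_ne (NC 𝒞 (i-1)) ⊤ with h | h
    · rw [h]; exact le_top
    · set k := (NC 𝒞 (i-1)).toNat with hkdef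
      have hkeq : (k : ℕ∞) = NC 𝒞 (i-1) := ENat.coe_toNat h
      rw [← hkeq, Nat.cast_le]
      by_contra hlt
      push_neg at hlt
      have hsq : (k+1)*(k+1) ≤ (NC 𝒞 i).toNat := Nat.le_sqrt.1 hlt
      have hpos : 1 ≤ (k+1)^2 := Nat.one_le_pow _ _ (by omega)
      have hD : (((k+1)^2 : ℕ) : ℕ∞) ≤ NC 𝒞 i := by
        rw [← ENat.coe_toNat hne, Nat.cast_le, pow_two]
        exact hsq
      have hclt : (((k+1)^2 - 1 : ℕ) : ℕ∞) < NC 𝒞 i :=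
        lt_of_lt_of_le (by exact_mod_cast (by omega : (k+1)^2 - 1 < (k+1)^2)) hD
      obtain ⟨S, h1, h2, h3, h4⟩ := exists_big_witness 𝒞 i _ hclt
      have h4' : (((k+1)^2 : ℕ) : ℕ∞) ≤ S.encard := by
        rwa [show (k+1)^2 - 1 + 1 = (k+1)^2 from by omega] at h4
      exact main_step 𝒞 i k hi S h1 h2 h3 h4' hkeq.ge
  · intro htop
    by_contra h
    set k := (NC 𝒞 (i-1)).toNat with hkdef
    have hkeq : (k : ℕ∞) = NC 𝒞 (i-1) := ENat.coe_toNat h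
    have hclt : (((k+1)^2 - 1 : ℕ) : ℕ∞) < NC 𝒞 i := by
      rw [htop]
      exact lt_of_le_of_ne le_top (ENat.coe_ne_top _)
    obtain ⟨S, h1, h2, h3, h4⟩ := exists_big_witness 𝒞 i _ hclt
    have hpos : 1 ≤ (k+1)^2 := Nat.one_le_pow _ _ (by omega)
    have h4' : (((k+1)^2 : ℕ) : ℕ∞) ≤ S.encard := by
      rwa [show (k+1)^2 - 1 + 1 = (k+1)^2 from by omega] at h4
    exact main_step 𝒞 i k hi S h1 h2 h3 h4' hkeq.ge
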